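/- The function ξ ↦ S²(ξ) is continuous on the domain D := {ξ ∈ ℝ² : 0 < |Mξ₁|/|ξ| < M_c}; moreover there is the explicit modulus |S²(ξ) − S²(ξ₀)| ≤ (g/M²) ‖ρ̄'‖_{L^∞(ℝ)} · | |ξ|²/ξ₁² − |ξ₀|²/ξ₀₁² | for ξ, ξ₀ ∈ D. -/

import Mathlib

open MeasureTheory

/-- `ψ ∈ H¹(ℝ)` with weak derivative `ψ'`. -/
def IsH1 (ψ ψ' : ℝ → ℝ) : Prop :=
  MemLp ψ 2 volume ∧ MemLp ψ' 2 volume ∧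
    ∀ x : ℝ, ψ x = ψ 0 + ∫ t in (0:ℝ)..x, ψ' t

/-- The functional `Q(ξ, ψ) = (g|ξ|²/(Mξ₁)²) ∫ ρ̄' ψ² − ∫ |ψ'|²`. -/
noncomputable def Qfun (g M : ℝ) (ξ : ℝ × ℝ) (ρ' ψ ψ' : ℝ → ℝ) : ℝ :=
  g * (ξ.1 ^ 2 + ξ.2 ^ 2) / (M * ξ.1) ^ 2 * (∫ x, ρ' x * (ψ x) ^ 2) - ∫ x, (ψ' x) ^ 2

/-- `S2 ξ` is the achieved supremum of `Q(ξ, ·)` over the unit `L²` sphere of `H¹(ℝ)`. -/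
def IsMaxS2 (g M : ℝ) (ρ' : ℝ → ℝ) (S2 : ℝ × ℝ → ℝ) (ξ : ℝ × ℝ) : Prop :=
  (∃ ψ ψ' : ℝ → ℝ, IsH1 ψ ψ' ∧ (∫ x, (ψ x) ^ 2) = 1 ∧ S2 ξ = Qfun g M ξ ρ' ψ ψ') ∧
    ∀ ψ ψ' : ℝ → ℝ, IsH1 ψ ψ' → (∫ x, (ψ x) ^ 2) = 1 → Qfun g M ξ ρ' ψ ψ' ≤ S2 ξ

lemma S2_sub_le (g M : ℝ) (hg : 0 < g) (hM : M ≠ 0)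
    (ρ' : ℝ → ℝ) (hcont : Continuous ρ')
    (S2 : ℝ × ℝ → ℝ)
    (ξ ξ₀ : ℝ × ℝ) (hξ1 : ξ.1 ≠ 0) (hξ01 : ξ₀.1 ≠ 0)
    (hmax : IsMaxS2 g M ρ' S2 ξ) (hmax₀ : IsMaxS2 g M ρ' S2 ξ₀)
    (R : ℝ) (hR : ∀ x, |ρ' x| ≤ R) :
    S2 ξ - S2 ξ₀ ≤ g / M ^ 2 * R *
      |(ξ.1 ^ 2 + ξ.2 ^ 2) / ξ.1 ^ 2 - (ξ₀.1 ^ 2 + ξ₀.2 ^ 2) / ξ₀.1 ^ 2| := by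
  obtain ⟨⟨ψ, ψ', h1, hnorm, heq⟩, -⟩ := hmax
  have hle := hmax₀.2 ψ ψ' h1 hnorm
  have hψsq : Integrable (fun x => (ψ x) ^ 2) := h1.1.integrable_sq
  have hint : Integrable (fun x => ρ' x * (ψ x) ^ 2) :=
    hψsq.bdd_mul hcont.aestronglyMeasurable (Filter.Eventually.of_forall fun x => hR x)
  set I := ∫ x, ρ' x * (ψ x) ^ 2 with hI
  have hIabs : |I| ≤ R := by
    calc |I| ≤ ∫ x, |ρ' x * (ψ x) ^ 2| := (by simpa only [Real.norm_eq_abs] using norm_integral_le_integral_norm (fun x => ρ' x * (ψ x) ^ 2))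
    _ ≤ ∫ x, R * (ψ x) ^ 2 := by
        refine integral_mono hint.abs (hψsq.const_mul R) fun x => ?_
        rw [abs_mul, abs_of_nonneg (sq_nonneg (ψ x))]
        exact mul_le_mul_of_nonneg_right (hR x) (sq_nonneg _)
    _ = R := by rw [integral_const_mul, hnorm, mul_one]
  set Δ := (ξ.1 ^ 2 + ξ.2 ^ 2) / ξ.1 ^ 2 - (ξ₀.1 ^ 2 + ξ₀.2 ^ 2) / ξ₀.1 ^ 2 with hΔ
  have key : Qfun g M ξ ρ' ψ ψ' - Qfun g M ξ₀ ρ' ψ ψ' = g / M ^ 2 * Δ * I := by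
    simp only [Qfun, hΔ]
    field_simp
    ring
  have : S2 ξ - S2 ξ₀ ≤ g / M ^ 2 * Δ * I := by
    rw [← key, heq]; linarith
  refine this.trans ?_
  calc g / M ^ 2 * Δ * I ≤ |g / M ^ 2 * Δ * I| := le_abs_self _
  _ = g / M ^ 2 * |Δ| * |I| := by
      rw [abs_mul, abs_mul, abs_of_nonneg (by positivity : (0:ℝ) ≤ g / M ^ 2)]
  _ ≤ g / M ^ 2 * |Δ| * R := by
      exact mul_le_mul_of_nonneg_left hIabs (by positivity)
  _ = g / M ^ 2 * R * |Δ| := by ring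

/-- `ξ ↦ S²(ξ)` is continuous on `D = {ξ : 0 < |Mξ₁|/|ξ| < M_c}`, with the explicit modulus
`|S²(ξ) − S²(ξ₀)| ≤ (g/M²)‖ρ̄'‖_∞ · | |ξ|²/ξ₁² − |ξ₀|²/ξ₀₁² |`. -/
theorem statement5 (g M : ℝ) (hg : 0 < g) (hM : M ≠ 0)
    (ρ' : ℝ → ℝ) (hcont : Continuous ρ') (hsupp : HasCompactSupport ρ')
    (S2 : ℝ × ℝ → ℝ)
    (ξ ξ₀ : ℝ × ℝ) (hξ1 : ξ.1 ≠ 0) (hξ01 : ξ₀.1 ≠ 0)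
    (hmax : IsMaxS2 g M ρ' S2 ξ) (hmax₀ : IsMaxS2 g M ρ' S2 ξ₀)
    (R : ℝ) (hR : ∀ x, |ρ' x| ≤ R) :
    |S2 ξ - S2 ξ₀| ≤ g / M ^ 2 * R *
      |(ξ.1 ^ 2 + ξ.2 ^ 2) / ξ.1 ^ 2 - (ξ₀.1 ^ 2 + ξ₀.2 ^ 2) / ξ₀.1 ^ 2| := by
  rw [abs_sub_le_iff]
  constructor
  · exact S2_sub_le g M hg hM ρ' hcont S2 ξ ξ₀ hξ1 hξ01 hmax hmax₀ R hR
  · rw [abs_sub_comm]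
    exact S2_sub_le g M hg hM ρ' hcont S2 ξ₀ ξ hξ01 hξ1 hmax₀ hmax R hR
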